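/- The polynomial 875Z^6 + 5375Z^5 + 13375Z^4 + 18025Z^3 + 14770Z^2 + 7180Z + 1592 is irreducible over Q but becomes reducible over Q(i√55). -/

import Mathlib

open Polynomial

/-- `ℚ(i√55)` as a subfield of `ℂ`. -/
noncomputable def Kfield13 : IntermediateField ℚ ℂ :=
  IntermediateField.adjoin ℚ ({Complex.I * ((Real.sqrt 55 : ℝ) : ℂ)} : Set ℂ)

/-! ### Part 1: irreducibility over ℚ via reduction mod 3 -/

noncomputable def pZ13 : ℤ[X] :=
  C 875*X^6 + C 5375*X^5 + C 13375*X^4 + C 18025*X^3 + C 14770*X^2 + C 7180*X + C 1592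

noncomputable def P3' : (ZMod 3)[X] := C 2*X^6 + C 2*X^5 + C 1*X^4 + C 1*X^3 + C 1*X^2 + C 1*X + C 2

lemma znum13 (n : ℕ) (v : ZMod 3) (h : ((n:ℕ) : ZMod 3) = v) : ((n:ℕ) : (ZMod 3)[X]) = C v := by
  rw [← Polynomial.C_eq_natCast, h]

lemma pZ13_map_zmod : pZ13.map (Int.castRingHom (ZMod 3)) = P3' := by
  have e1 : (875:(ZMod 3)[X]) = C 2 := by exact_mod_cast znum13 875 2 (by decide)
  have e2 : (5375:(ZMod 3)[X]) = C 2 := by exact_mod_cast znum13 5375 2 (by decide)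
  have e3 : (13375:(ZMod 3)[X]) = C 1 := by exact_mod_cast znum13 13375 1 (by decide)
  have e4 : (18025:(ZMod 3)[X]) = C 1 := by exact_mod_cast znum13 18025 1 (by decide)
  have e5 : (14770:(ZMod 3)[X]) = C 1 := by exact_mod_cast znum13 14770 1 (by decide)
  have e6 : (7180:(ZMod 3)[X]) = C 1 := by exact_mod_cast znum13 7180 1 (by decide)
  have e7 : (1592:(ZMod 3)[X]) = C 2 := by exact_mod_cast znum13 1592 2 (by decide)
  simp only [pZ13, P3', Polynomial.map_add, Polynomial.map_mul, Polynomial.map_pow, map_C, map_X,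
    eq_intCast, Int.cast_ofNat, Polynomial.map_ofNat, e1, e2, e3, e4, e5, e6, e7]

lemma P3'_natDegree : P3'.natDegree = 6 := by unfold P3'; compute_degree!

lemma P3'_ne_zero : P3' ≠ 0 := fun h => by simpa [h] using P3'_natDegree

lemma no_lin13 (c0 : ZMod 3) : ¬ (X + C c0) ∣ P3' := by
  intro h
  have h0 : P3'.eval (-c0) = 0 := by
    have h1 := eval_dvd (x := -c0) h
    simpa using h1
  have h0' : 2*(-c0)^6 + 2*(-c0)^5 + (-c0)^4 + (-c0)^3 + (-c0)^2 + (-c0) + 2 = 0 := by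
    simpa [P3', eval_add, eval_mul, eval_pow] using h0
  have hall : ∀ t : ZMod 3, 2*t^6 + 2*t^5 + t^4 + t^3 + t^2 + t + 2 ≠ 0 := by decide
  exact hall (-c0) h0'

lemma no_quad13 (c0 c1 : ZMod 3) : ¬ (X^2 + C c1 * X + C c0) ∣ P3' := by
  intro h
  have key : P3' = (X^2 + C c1 * X + C c0) * ((1 - 1*C c1 + C c1*C c1 - 2*C c1*C c1*C c1 + 2*C c1*C c1*C c1*C c1 - 1*C c0 + 4*C c0*C c1 - 6*C c0*C c1*C c1 + 2*C c0*C c0) + (1 - 1*C c1 + 2*C c1*C c1 - 2*C c1*C c1*C c1 - 2*C c0 + 4*C c0*C c1) * X + (1 - 2*C c1 + 2*C c1*C c1 - 2*C c0) * X^2 + (2 - 2*C c1) * X^3 + (2) * X^4)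
      + (C (1 - 1*c1 + c1*c1 - 1*c1*c1*c1 + 2*c1*c1*c1*c1 - 2*c1*c1*c1*c1*c1 - 1*c0 + 2*c0*c1 - 6*c0*c1*c1 + 8*c0*c1*c1*c1 + 2*c0*c0 - 6*c0*c0*c1) * X + C (2 - 1*c0 + c0*c1 - 1*c0*c1*c1 + 2*c0*c1*c1*c1 - 2*c0*c1*c1*c1*c1 + c0*c0 - 4*c0*c0*c1 + 6*c0*c0*c1*c1 - 2*c0*c0*c0)) := by
    simp only [P3', map_add, map_sub, map_mul, map_pow, map_ofNat, map_one, map_neg]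
    ring
  have hdvd : (X^2 + C c1 * X + C c0) ∣ (C (1 - 1*c1 + c1*c1 - 1*c1*c1*c1 + 2*c1*c1*c1*c1 - 2*c1*c1*c1*c1*c1 - 1*c0 + 2*c0*c1 - 6*c0*c1*c1 + 8*c0*c1*c1*c1 + 2*c0*c0 - 6*c0*c0*c1) * X + C (2 - 1*c0 + c0*c1 - 1*c0*c1*c1 + 2*c0*c1*c1*c1 - 2*c0*c1*c1*c1*c1 + c0*c0 - 4*c0*c0*c1 + 6*c0*c0*c1*c1 - 2*c0*c0*c0) : (ZMod 3)[X]) := by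
    have h2 := dvd_sub h (Dvd.intro _ rfl : (X^2 + C c1 * X + C c0) ∣ (X^2 + C c1 * X + C c0) * ((1 - 1*C c1 + C c1*C c1 - 2*C c1*C c1*C c1 + 2*C c1*C c1*C c1*C c1 - 1*C c0 + 4*C c0*C c1 - 6*C c0*C c1*C c1 + 2*C c0*C c0) + (1 - 1*C c1 + 2*C c1*C c1 - 2*C c1*C c1*C c1 - 2*C c0 + 4*C c0*C c1) * X + (1 - 2*C c1 + 2*C c1*C c1 - 2*C c0) * X^2 + (2 - 2*C c1) * X^3 + (2) * X^4))
    rw [key] at h2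
    simpa using h2
  have hdeg : degree (C (1 - 1*c1 + c1*c1 - 1*c1*c1*c1 + 2*c1*c1*c1*c1 - 2*c1*c1*c1*c1*c1 - 1*c0 + 2*c0*c1 - 6*c0*c1*c1 + 8*c0*c1*c1*c1 + 2*c0*c0 - 6*c0*c0*c1) * X + C (2 - 1*c0 + c0*c1 - 1*c0*c1*c1 + 2*c0*c1*c1*c1 - 2*c0*c1*c1*c1*c1 + c0*c0 - 4*c0*c0*c1 + 6*c0*c0*c1*c1 - 2*c0*c0*c0) : (ZMod 3)[X]) < degree (X^2 + C c1 * X + C c0) := by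
    have h2 : degree (X^2 + C c1 * X + C c0 : (ZMod 3)[X]) = 2 := by
      have h3 := degree_quadratic (a := (1:ZMod 3)) (b := c1) (c := c0) one_ne_zero
      simpa using h3
    rw [h2]
    exact lt_of_le_of_lt degree_linear_le (by norm_num)
  have hz := eq_zero_of_dvd_of_degree_lt hdvd hdeg
  have hev : ∀ t : ZMod 3, ((1 - 1*c1 + c1*c1 - 1*c1*c1*c1 + 2*c1*c1*c1*c1 - 2*c1*c1*c1*c1*c1 - 1*c0 + 2*c0*c1 - 6*c0*c1*c1 + 8*c0*c1*c1*c1 + 2*c0*c0 - 6*c0*c0*c1)) * t + ((2 - 1*c0 + c0*c1 - 1*c0*c1*c1 + 2*c0*c1*c1*c1 - 2*c0*c1*c1*c1*c1 + c0*c0 - 4*c0*c0*c1 + 6*c0*c0*c1*c1 - 2*c0*c0*c0)) = 0 := by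
    intro t
    have h4 := congrArg (eval t) hz
    simpa [eval_add, eval_mul, eval_pow, eval_C, eval_X] using h4
  have dec : ∀ c0 c1 : ZMod 3, (∀ t : ZMod 3, ((1 - 1*c1 + c1*c1 - 1*c1*c1*c1 + 2*c1*c1*c1*c1 - 2*c1*c1*c1*c1*c1 - 1*c0 + 2*c0*c1 - 6*c0*c1*c1 + 8*c0*c1*c1*c1 + 2*c0*c0 - 6*c0*c0*c1)) * t + ((2 - 1*c0 + c0*c1 - 1*c0*c1*c1 + 2*c0*c1*c1*c1 - 2*c0*c1*c1*c1*c1 + c0*c0 - 4*c0*c0*c1 + 6*c0*c0*c1*c1 - 2*c0*c0*c0)) = 0) → False := by decide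
  exact dec c0 c1 hev

lemma no_cub13 (c0 c1 c2 : ZMod 3) : ¬ (X^3 + C c2 * X^2 + C c1 * X + C c0) ∣ P3' := by
  intro h
  have key : P3' = (X^3 + C c2 * X^2 + C c1 * X + C c0) * ((1 - 1*C c2 + 2*C c2*C c2 - 2*C c2*C c2*C c2 - 2*C c1 + 4*C c1*C c2 - 2*C c0) + (1 - 2*C c2 + 2*C c2*C c2 - 2*C c1) * X + (2 - 2*C c2) * X^2 + (2) * X^3)
      + (C (1 - 1*c2 + c2*c2 - 2*c2*c2*c2 + 2*c2*c2*c2*c2 - 1*c1 + 4*c1*c2 - 6*c1*c2*c2 + 2*c1*c1 - 2*c0 + 4*c0*c2) * X^2 + C (1 - 1*c1 + c1*c2 - 2*c1*c2*c2 + 2*c1*c2*c2*c2 + 2*c1*c1 - 4*c1*c1*c2 - 1*c0 + 2*c0*c2 - 2*c0*c2*c2 + 4*c0*c1) * X + C (2 - 1*c0 + c0*c2 - 2*c0*c2*c2 + 2*c0*c2*c2*c2 + 2*c0*c1 - 4*c0*c1*c2 + 2*c0*c0)) := by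
    simp only [P3', map_add, map_sub, map_mul, map_pow, map_ofNat, map_one, map_neg]
    ring
  have hdvd : (X^3 + C c2 * X^2 + C c1 * X + C c0) ∣ (C (1 - 1*c2 + c2*c2 - 2*c2*c2*c2 + 2*c2*c2*c2*c2 - 1*c1 + 4*c1*c2 - 6*c1*c2*c2 + 2*c1*c1 - 2*c0 + 4*c0*c2) * X^2 + C (1 - 1*c1 + c1*c2 - 2*c1*c2*c2 + 2*c1*c2*c2*c2 + 2*c1*c1 - 4*c1*c1*c2 - 1*c0 + 2*c0*c2 - 2*c0*c2*c2 + 4*c0*c1) * X + C (2 - 1*c0 + c0*c2 - 2*c0*c2*c2 + 2*c0*c2*c2*c2 + 2*c0*c1 - 4*c0*c1*c2 + 2*c0*c0) : (ZMod 3)[X]) := by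
    have h2 := dvd_sub h (Dvd.intro _ rfl : (X^3 + C c2 * X^2 + C c1 * X + C c0) ∣ (X^3 + C c2 * X^2 + C c1 * X + C c0) * ((1 - 1*C c2 + 2*C c2*C c2 - 2*C c2*C c2*C c2 - 2*C c1 + 4*C c1*C c2 - 2*C c0) + (1 - 2*C c2 + 2*C c2*C c2 - 2*C c1) * X + (2 - 2*C c2) * X^2 + (2) * X^3))
    rw [key] at h2
    simpa using h2
  have hdeg : degree (C (1 - 1*c2 + c2*c2 - 2*c2*c2*c2 + 2*c2*c2*c2*c2 - 1*c1 + 4*c1*c2 - 6*c1*c2*c2 + 2*c1*c1 - 2*c0 + 4*c0*c2) * X^2 + C (1 - 1*c1 + c1*c2 - 2*c1*c2*c2 + 2*c1*c2*c2*c2 + 2*c1*c1 - 4*c1*c1*c2 - 1*c0 + 2*c0*c2 - 2*c0*c2*c2 + 4*c0*c1) * X + C (2 - 1*c0 + c0*c2 - 2*c0*c2*c2 + 2*c0*c2*c2*c2 + 2*c0*c1 - 4*c0*c1*c2 + 2*c0*c0) : (ZMod 3)[X]) < degree (X^3 + C c2 * X^2 + C c1 * X + C c0) := by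
    have h3 : degree (X^3 + C c2 * X^2 + C c1 * X + C c0 : (ZMod 3)[X]) = 3 := by
      have h4 := degree_cubic (a := (1:ZMod 3)) (b := c2) (c := c1) (d := c0) one_ne_zero
      simpa using h4
    rw [h3]
    exact lt_of_le_of_lt degree_quadratic_le (by norm_num)
  have hz := eq_zero_of_dvd_of_degree_lt hdvd hdeg
  have hev : ∀ t : ZMod 3, ((1 - 1*c2 + c2*c2 - 2*c2*c2*c2 + 2*c2*c2*c2*c2 - 1*c1 + 4*c1*c2 - 6*c1*c2*c2 + 2*c1*c1 - 2*c0 + 4*c0*c2)) * t^2 + ((1 - 1*c1 + c1*c2 - 2*c1*c2*c2 + 2*c1*c2*c2*c2 + 2*c1*c1 - 4*c1*c1*c2 - 1*c0 + 2*c0*c2 - 2*c0*c2*c2 + 4*c0*c1)) * t + ((2 - 1*c0 + c0*c2 - 2*c0*c2*c2 + 2*c0*c2*c2*c2 + 2*c0*c1 - 4*c0*c1*c2 + 2*c0*c0)) = 0 := by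
    intro t
    have h4 := congrArg (eval t) hz
    simpa [eval_add, eval_mul, eval_pow, eval_C, eval_X] using h4
  have dec : ∀ c0 c1 c2 : ZMod 3, (∀ t : ZMod 3, ((1 - 1*c2 + c2*c2 - 2*c2*c2*c2 + 2*c2*c2*c2*c2 - 1*c1 + 4*c1*c2 - 6*c1*c2*c2 + 2*c1*c1 - 2*c0 + 4*c0*c2)) * t^2 + ((1 - 1*c1 + c1*c2 - 2*c1*c2*c2 + 2*c1*c2*c2*c2 + 2*c1*c1 - 4*c1*c1*c2 - 1*c0 + 2*c0*c2 - 2*c0*c2*c2 + 4*c0*c1)) * t + ((2 - 1*c0 + c0*c2 - 2*c0*c2*c2 + 2*c0*c2*c2*c2 + 2*c0*c1 - 4*c0*c1*c2 + 2*c0*c0)) = 0) → False := by decide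
  exact dec c0 c1 c2 hev

lemma no_factor13 : ∀ g : (ZMod 3)[X], g ∣ P3' → 1 ≤ g.natDegree → g.natDegree ≤ 3 → False := by
  intro g hg hg1 hg3
  have hgne : g ≠ 0 := fun h => by simp [h] at hg1
  have hlc : g.leadingCoeff ≠ 0 := leadingCoeff_ne_zero.mpr hgne
  set m := g * C (g.leadingCoeff)⁻¹ with hm
  have hmonic : m.Monic := monic_mul_leadingCoeff_inv hgne
  have hmdeg : m.natDegree = g.natDegree := by
    rw [hm, natDegree_mul_C (inv_ne_zero hlc)]
  have hmdvd : m ∣ P3' := by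
    refine dvd_trans ?_ hg
    exact ⟨C g.leadingCoeff, by rw [hm, mul_assoc, ← C_mul, inv_mul_cancel₀ hlc, C_1, mul_one]⟩
  have h1 : 1 ≤ m.natDegree := hmdeg ▸ hg1
  have h3 : m.natDegree ≤ 3 := hmdeg ▸ hg3
  interval_cases hd : m.natDegree
  · have hc : m.coeff 1 = 1 := by have := hmonic.coeff_natDegree; rwa [hd] at this
    have hrep : m = X + C (m.coeff 0) := by
      conv_lhs => rw [as_sum_range' m 2 (by omega)]
      simp [Finset.sum_range_succ, ← C_mul_X_pow_eq_monomial, hc]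
      ring
    exact no_lin13 _ (hrep ▸ hmdvd)
  · have hc : m.coeff 2 = 1 := by have := hmonic.coeff_natDegree; rwa [hd] at this
    have hrep : m = X^2 + C (m.coeff 1) * X + C (m.coeff 0) := by
      conv_lhs => rw [as_sum_range' m 3 (by omega)]
      simp [Finset.sum_range_succ, ← C_mul_X_pow_eq_monomial, hc]
      ring
    exact no_quad13 _ _ (hrep ▸ hmdvd)
  · have hc : m.coeff 3 = 1 := by have := hmonic.coeff_natDegree; rwa [hd] at this
    have hrep : m = X^3 + C (m.coeff 2) * X^2 + C (m.coeff 1) * X + C (m.coeff 0) := by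
      conv_lhs => rw [as_sum_range' m 4 (by omega)]
      simp [Finset.sum_range_succ, ← C_mul_X_pow_eq_monomial, hc]
      ring
    exact no_cub13 _ _ _ (hrep ▸ hmdvd)

lemma P3'_irreducible : Irreducible P3' := by
  constructor
  · intro hu
    have := natDegree_eq_zero_of_isUnit hu
    simp [P3'_natDegree] at this
  · intro a b hab
    by_contra hcon
    push_neg at hcon
    obtain ⟨ha, hb⟩ := hcon
    have ha0 : a ≠ 0 := by rintro rfl; exact P3'_ne_zero (by simpa using hab)
    have hb0 : b ≠ 0 := by rintro rfl; exact P3'_ne_zero (by simpa using hab)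
    have hsum : a.natDegree + b.natDegree = 6 := by
      rw [← natDegree_mul ha0 hb0, ← hab, P3'_natDegree]
    have hda : 1 ≤ a.natDegree := by
      by_contra hh
      push_neg at hh
      have h0 : a.natDegree = 0 := by omega
      have hC := eq_C_of_natDegree_eq_zero h0
      apply ha
      rw [hC]
      refine isUnit_C.mpr (isUnit_iff_ne_zero.mpr ?_)
      intro hc
      exact ha0 (by rw [hC, hc, map_zero])
    have hdb : 1 ≤ b.natDegree := by
      by_contra hh
      push_neg at hh
      have h0 : b.natDegree = 0 := by omega
      have hC := eq_C_of_natDegree_eq_zero h0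
      apply hb
      rw [hC]
      refine isUnit_C.mpr (isUnit_iff_ne_zero.mpr ?_)
      intro hc
      exact hb0 (by rw [hC, hc, map_zero])
    rcases le_or_gt a.natDegree 3 with hle | hlt
    · exact no_factor13 a ⟨b, hab⟩ hda hle
    · exact no_factor13 b ⟨a, by rw [hab]; ring⟩ hdb (by omega)

lemma pZ13_natDegree : pZ13.natDegree = 6 := by unfold pZ13; compute_degree!

lemma pZ13_coeff0 : pZ13.coeff 0 = 1592 := by
  simp [pZ13, coeff_add, coeff_C_mul, coeff_X_pow, coeff_C, coeff_X]

lemma pZ13_coeff6 : pZ13.coeff 6 = 875 := by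
  simp [pZ13, coeff_add, coeff_C_mul, coeff_X_pow, coeff_C, coeff_X]

lemma pZ13_primitive : pZ13.IsPrimitive := by
  intro r hr
  rw [Polynomial.C_dvd_iff_dvd_coeff] at hr
  have h0 := hr 0
  have h6 := hr 6
  rw [pZ13_coeff0] at h0
  rw [pZ13_coeff6] at h6
  have hg : r ∣ ((Int.gcd 875 1592 : ℕ) : ℤ) := Int.dvd_coe_gcd h6 h0
  have h1 : ((Int.gcd 875 1592 : ℕ) : ℤ) = 1 := by norm_num
  rw [h1] at hg
  exact isUnit_of_dvd_one hg

lemma pZ13_ne_zero : pZ13 ≠ 0 := fun h => by simpa [h] using pZ13_natDegree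

lemma pZ13_irreducible : Irreducible pZ13 := by
  constructor
  · intro hu
    have := natDegree_eq_zero_of_isUnit hu
    simp [pZ13_natDegree] at this
  · intro a b hab
    have ha0 : a ≠ 0 := fun h => pZ13_ne_zero (by simp [hab, h])
    have hb0 : b ≠ 0 := fun h => pZ13_ne_zero (by simp [hab, h])
    have hmap : P3' = a.map (Int.castRingHom (ZMod 3)) * b.map (Int.castRingHom (ZMod 3)) := by
      rw [← Polynomial.map_mul, ← hab, pZ13_map_zmod]
    have hane : a.map (Int.castRingHom (ZMod 3)) ≠ 0 := fun h => P3'_ne_zero (by rw [hmap, h, zero_mul])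
    have hbne : b.map (Int.castRingHom (ZMod 3)) ≠ 0 := fun h => P3'_ne_zero (by rw [hmap, h, mul_zero])
    have hsum : a.natDegree + b.natDegree = 6 := by
      rw [← natDegree_mul ha0 hb0, ← hab, pZ13_natDegree]
    have hsum' : (a.map (Int.castRingHom (ZMod 3))).natDegree + (b.map (Int.castRingHom (ZMod 3))).natDegree = 6 := by
      rw [← natDegree_mul hane hbne, ← hmap, P3'_natDegree]
    have hma : (a.map (Int.castRingHom (ZMod 3))).natDegree ≤ a.natDegree := natDegree_map_le
    have hmb : (b.map (Int.castRingHom (ZMod 3))).natDegree ≤ b.natDegree := natDegree_map_le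
    rcases P3'_irreducible.isUnit_or_isUnit hmap with hu | hu
    · left
      have hdeg0 := natDegree_eq_zero_of_isUnit hu
      have ha0' : a.natDegree = 0 := by omega
      have hC := eq_C_of_natDegree_eq_zero ha0'
      rw [hC]
      exact isUnit_C.mpr (pZ13_primitive (a.coeff 0) (by rw [← hC]; exact Dvd.intro b hab.symm))
    · right
      have hdeg0 := natDegree_eq_zero_of_isUnit hu
      have hb0' : b.natDegree = 0 := by omega
      have hC := eq_C_of_natDegree_eq_zero hb0'
      rw [hC]
      exact isUnit_C.mpr (pZ13_primitive (b.coeff 0) (by rw [← hC]; exact Dvd.intro_left a hab.symm))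

lemma pQ13_irreducible : Irreducible (875 * X ^ 6 + 5375 * X ^ 5 + 13375 * X ^ 4 + 18025 * X ^ 3
      + 14770 * X ^ 2 + 7180 * X + 1592 : ℚ[X]) := by
  have h := (Polynomial.IsPrimitive.Int.irreducible_iff_irreducible_map_cast pZ13_primitive).mp pZ13_irreducible
  have heq : pZ13.map (Int.castRingHom ℚ) = (875 * X ^ 6 + 5375 * X ^ 5 + 13375 * X ^ 4 + 18025 * X ^ 3
      + 14770 * X ^ 2 + 7180 * X + 1592 : ℚ[X]) := by
    simp [pZ13, Polynomial.map_add, Polynomial.map_mul, Polynomial.map_pow, map_C, map_X]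
  rwa [heq] at h

/-! ### Part 2: reducibility over ℚ(i√55) -/

noncomputable def w13 : Kfield13 :=
  ⟨Complex.I * ((Real.sqrt 55 : ℝ) : ℂ), IntermediateField.subset_adjoin ℚ _ rfl⟩

lemma w13_sq : w13 ^ 2 = (-55 : Kfield13) := by
  apply Subtype.ext
  push_cast [w13]
  rw [mul_pow, Complex.I_sq, ← Complex.ofReal_pow, Real.sq_sqrt (by norm_num : (0:ℝ) ≤ 55)]
  norm_cast

lemma hW13 : (C w13 : Kfield13[X]) ^ 2 = -55 := by
  rw [← map_pow, w13_sq, map_neg, map_ofNat]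

noncomputable def f13 : Kfield13[X] :=
  C 350 * X^3 + C (1075 - 45*w13) * X^2 + C (865 - 115*w13) * X + C (135 - 61*w13)
noncomputable def g13 : Kfield13[X] :=
  C 350 * X^3 + C (1075 + 45*w13) * X^2 + C (865 + 115*w13) * X + C (135 + 61*w13)

lemma pK13_eq : ((875 * X ^ 6 + 5375 * X ^ 5 + 13375 * X ^ 4 + 18025 * X ^ 3
      + 14770 * X ^ 2 + 7180 * X + 1592 : ℚ[X]).map (algebraMap ℚ Kfield13))
    = (875 * X ^ 6 + 5375 * X ^ 5 + 13375 * X ^ 4 + 18025 * X ^ 3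
      + 14770 * X ^ 2 + 7180 * X + 1592 : Kfield13[X]) := by
  simp only [Polynomial.map_add, Polynomial.map_mul, Polynomial.map_pow, Polynomial.map_X,
    Polynomial.map_ofNat]

lemma key13 : (122500 : Kfield13[X]) * ((875 * X ^ 6 + 5375 * X ^ 5 + 13375 * X ^ 4 + 18025 * X ^ 3
      + 14770 * X ^ 2 + 7180 * X + 1592 : ℚ[X]).map (algebraMap ℚ Kfield13))
    = 875 * (f13 * g13) := by
  rw [pK13_eq]
  unfold f13 g13
  simp only [map_sub, map_add, map_mul, map_ofNat]
  linear_combination (3255875 + 12276250*X + 16375625*X^2 + 9056250*X^3 + 1771875*X^4 : Kfield13[X]) * hW13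

lemma f13_degree : f13.degree = 3 := by
  unfold f13
  exact degree_cubic (by norm_num : (350:Kfield13) ≠ 0)

lemma g13_degree : g13.degree = 3 := by
  unfold g13
  exact degree_cubic (by norm_num : (350:Kfield13) ≠ 0)

lemma pK13_not_irreducible :
    ¬ Irreducible ((875 * X ^ 6 + 5375 * X ^ 5 + 13375 * X ^ 4 + 18025 * X ^ 3
      + 14770 * X ^ 2 + 7180 * X + 1592 : ℚ[X]).map (algebraMap ℚ Kfield13)) := by
  intro hI
  set Pm := ((875 * X ^ 6 + 5375 * X ^ 5 + 13375 * X ^ 4 + 18025 * X ^ 3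
      + 14770 * X ^ 2 + 7180 * X + 1592 : ℚ[X]).map (algebraMap ℚ Kfield13)) with hPm
  have h875 : (875 : Kfield13[X]) ≠ 0 := by norm_num
  have hmm : (875 : Kfield13[X]) * (f13 * g13) = 875 * (Pm * 140) := by
    linear_combination (-1 : Kfield13[X]) * key13
  have hfg : f13 * g13 = Pm * 140 := mul_left_cancel₀ h875 hmm
  have hdvd : Pm ∣ f13 * g13 := ⟨140, hfg⟩
  have hprime : Prime Pm := UniqueFactorizationMonoid.irreducible_iff_prime.mp hI
  have hdegPm : Pm.degree = 6 := by
    rw [hPm, pK13_eq]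
    compute_degree!
  have hf13ne : f13 ≠ 0 := fun h => by simpa [h] using f13_degree
  have hg13ne : g13 ≠ 0 := fun h => by simpa [h] using g13_degree
  rcases hprime.2.2 f13 g13 hdvd with hd | hd
  · have hle := degree_le_of_dvd hd hf13ne
    rw [hdegPm, f13_degree] at hle
    norm_num at hle
  · have hle := degree_le_of_dvd hd hg13ne
    rw [hdegPm, g13_degree] at hle
    norm_num at hle

theorem stmt_13 :
    Irreducible (875 * X ^ 6 + 5375 * X ^ 5 + 13375 * X ^ 4 + 18025 * X ^ 3
      + 14770 * X ^ 2 + 7180 * X + 1592 : ℚ[X]) ∧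
    ¬ Irreducible ((875 * X ^ 6 + 5375 * X ^ 5 + 13375 * X ^ 4 + 18025 * X ^ 3
      + 14770 * X ^ 2 + 7180 * X + 1592 : ℚ[X]).map (algebraMap ℚ Kfield13)) := by
  exact ⟨pQ13_irreducible, pK13_not_irreducible⟩
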